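/- Let k ≥ 3 and G = C(2k+1; {1,3}). For every vertex cut S of G (i.e., S ⊆ V(G) with G−S disconnected), |S| / c(G−S) ≥ (k+1)/(k−1), where c denotes the number of connected components. -/

import Mathlib

open SimpleGraph

def circGraph (n : ℕ) (s : Set (ZMod n)) : SimpleGraph (ZMod n) where
  Adj i j := i ≠ j ∧ (i - j ∈ s ∨ j - i ∈ s)
  symm := ⟨fun i j h => ⟨h.1.symm, h.2.symm⟩⟩
  loopless := ⟨fun i h => h.1 rfl⟩

/-- Number of connected components of `G - S`. -/
noncomputable def numComp {V : Type*} (G : SimpleGraph V) (S : Set V) : ℕ :=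
  Nat.card ((G.induce Sᶜ).ConnectedComponent)

/-- `S` is a vertex cut: removing `S` leaves a disconnected graph. -/
def IsVertexCut {V : Type*} (G : SimpleGraph V) (S : Set V) : Prop :=
  1 < numComp G S

/-- Toughness: minimum of |S| / c(G - S) over vertex cuts `S`. -/
noncomputable def toughness {V : Type*} (G : SimpleGraph V) : ℝ :=
  sInf {x : ℝ | ∃ S : Set V, IsVertexCut G S ∧ x = (S.ncard : ℝ) / (numComp G S : ℝ)}

def MinimallyTough {V : Type*} (G : SimpleGraph V) (t : ℝ) : Prop :=
  toughness G = t ∧ ∀ e ∈ G.edgeSet, toughness (G.deleteEdges {e}) < t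

namespace Stmt2Aux

def Bd {n : ℕ} (S : Set (ZMod n)) : Set (ZMod n) :=
  {g | g ∈ S ∧ g - 1 ∉ S ∧
    ((g + 1 ∈ S ∧ g + 2 ∈ S) ∨ (g + 1 ∉ S ∧ g - 2 ∈ S ∧ g + 2 ∈ S))}

lemma Bd_subset {n : ℕ} (S : Set (ZMod n)) : Bd S ⊆ S := fun _ hg => hg.1

variable {n : ℕ}

lemma cast_ne_zero (hn : 7 ≤ n) {a : ℕ} (ha : 0 < a) (ha' : a < 7) :
    ((a : ℕ) : ZMod n) ≠ 0 := by
  haveI : NeZero n := ⟨by omega⟩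
  rw [Ne, ZMod.natCast_eq_zero_iff]
  intro h
  exact absurd (Nat.le_of_dvd ha h) (by omega)

lemma one_ne_zero' (hn : 7 ≤ n) : (1 : ZMod n) ≠ 0 := by
  have := cast_ne_zero hn (a := 1) (by norm_num) (by norm_num); simpa using this

lemma three_ne_zero' (hn : 7 ≤ n) : (3 : ZMod n) ≠ 0 := by
  have := cast_ne_zero hn (a := 3) (by norm_num) (by norm_num); simpa using this

lemma adj_one (hn : 7 ≤ n) (x : ZMod n) : (circGraph n {1, 3}).Adj x (x + 1) := by
  refine show _ ∧ _ from ⟨fun h => ?_, Or.inr ?_⟩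
  · exact one_ne_zero' hn (by linear_combination -h)
  · have : x + 1 - x = 1 := by ring
    rw [this]; left; rfl

lemma adj_three (hn : 7 ≤ n) (x : ZMod n) : (circGraph n {1, 3}).Adj x (x + 3) := by
  refine show _ ∧ _ from ⟨fun h => ?_, Or.inr ?_⟩
  · exact three_ne_zero' hn (by linear_combination -h)
  · have : x + 3 - x = 3 := by ring
    rw [this]; right; rfl

section S
variable {S : Set (ZMod n)}

lemma ind_adj {x y : ZMod n} (hx : x ∉ S) (hy : y ∉ S)
    (h : (circGraph n {1, 3}).Adj x y) :
    ((circGraph n {1, 3}).induce Sᶜ).Adj ⟨x, hx⟩ ⟨y, hy⟩ := h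

lemma reach (hn : 7 ≤ n) :
    ∀ d : ℕ, ∀ x y : ZMod n, ∀ (hx : x ∉ S) (hy : y ∉ S),
    y = x + (d : ZMod n) →
    (∀ j : ℕ, 1 ≤ j → j ≤ d → (x + (j : ZMod n)) ∉ Bd S) →
    ((circGraph n {1, 3}).induce Sᶜ).Reachable ⟨x, hx⟩ ⟨y, hy⟩ := by
  intro d
  induction d using Nat.strong_induction_on with
  | _ d IH =>
  intro x y hx hy hxy hnb
  match d, hxy with
  | 0, hxy =>
    have : y = x := by simpa using hxy
    subst this
    exact Reachable.refl _
  | (d+1), hxy =>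
    by_cases h1 : x + 1 ∈ S
    · match d, hxy with
      | 0, hxy =>
        exfalso; apply hy; rw [hxy]; simpa using h1
      | (d'+1), hxy =>
        by_cases h2 : x + 2 ∈ S
        · by_cases h3 : x + 3 ∈ S
          · exfalso
            apply hnb 1 le_rfl (by omega)
            push_cast
            refine ⟨h1, by simpa using hx, Or.inl ⟨?_, ?_⟩⟩
            · have : x + 1 + 1 = x + 2 := by ring
              rw [this]; exact h2
            · have : x + 1 + 2 = x + 3 := by ring
              rw [this]; exact h3
          · match d', hxy with
            | 0, hxy =>
              exfalso; apply hy
              have e : x + ((0 + 1 + 1 : ℕ) : ZMod n) = x + 2 := by push_cast; ring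
              rw [hxy, e]; exact h2
            | (d''+1), hxy =>
              have step : ((circGraph n {1, 3}).induce Sᶜ).Reachable ⟨x, hx⟩ ⟨x + 3, h3⟩ :=
                (ind_adj hx h3 (adj_three hn x)).reachable
              refine step.trans (IH d'' (by omega) (x+3) y h3 hy ?_ ?_)
              · rw [hxy]; push_cast; ring
              · intro j hj1 hj2
                have e : (x + 3) + (j : ZMod n) = x + ((j + 3 : ℕ) : ZMod n) := by
                  push_cast; ring
                rw [e]; exact hnb (j+3) (by omega) (by omega)
        · -- x + 2 ∉ S
          have hb1 : (x + 1) ∉ Bd S := by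
            have := hnb 1 le_rfl (by omega); simpa using this
          have key : x - 1 ∉ S ∨ x + 3 ∉ S := by
            by_contra hcon
            push_neg at hcon
            apply hb1
            refine ⟨h1, by simpa using hx, Or.inr ⟨?_, ?_, ?_⟩⟩
            · have : x + 1 + 1 = x + 2 := by ring
              rw [this]; exact h2
            · have : x + 1 - 2 = x - 1 := by ring
              rw [this]; exact hcon.1
            · have : x + 1 + 2 = x + 3 := by ring
              rw [this]; exact hcon.2
          have step : ((circGraph n {1, 3}).induce Sᶜ).Reachable ⟨x, hx⟩ ⟨x + 2, h2⟩ := by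
            rcases key with hm | h3
            · have a1 : (circGraph n {1, 3}).Adj x (x - 1) := by
                have := (adj_one hn (x - 1)).symm
                have e : x - 1 + 1 = x := by ring
                rwa [e] at this
              have a2 : (circGraph n {1, 3}).Adj (x - 1) (x + 2) := by
                have := adj_three hn (x - 1)
                have e : x - 1 + 3 = x + 2 := by ring
                rwa [e] at this
              exact ((ind_adj hx hm a1).reachable).trans (ind_adj hm h2 a2).reachable
            · have a1 := adj_three hn x
              have a2 : (circGraph n {1, 3}).Adj (x + 3) (x + 2) := by
                have := (adj_one hn (x + 2)).symm
                have e : x + 2 + 1 = x + 3 := by ring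
                rwa [e] at this
              exact ((ind_adj hx h3 a1).reachable).trans (ind_adj h3 h2 a2).reachable
          refine step.trans (IH d' (by omega) (x+2) y h2 hy ?_ ?_)
          · rw [hxy]; push_cast; ring
          · intro j hj1 hj2
            have e : (x + 2) + (j : ZMod n) = x + ((j + 2 : ℕ) : ZMod n) := by
              push_cast; ring
            rw [e]; exact hnb (j+2) (by omega) (by omega)
    · have step : ((circGraph n {1, 3}).induce Sᶜ).Reachable ⟨x, hx⟩ ⟨x + 1, h1⟩ :=
        (ind_adj hx h1 (adj_one hn x)).reachable
      refine step.trans (IH d (by omega) (x+1) y h1 hy ?_ ?_)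
      · rw [hxy]; push_cast; ring
      · intro j hj1 hj2
        have e : (x + 1) + (j : ZMod n) = x + ((j + 1 : ℕ) : ZMod n) := by
          push_cast; ring
        rw [e]; exact hnb (j+1) (by omega) (by omega)


variable [NeZero n]

lemma exists_bd (hBd : (Bd S).Nonempty) (x : ZMod n) :
    ∃ j : ℕ, x + ((j + 1 : ℕ) : ZMod n) ∈ Bd S := by
  obtain ⟨b, hb⟩ := hBd
  refine ⟨(b - x - 1).val, ?_⟩
  have e : x + (((b - x - 1).val + 1 : ℕ) : ZMod n) = b := by
    push_cast
    rw [ZMod.natCast_zmod_val]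
    ring
  rw [e]; exact hb

open Classical in
noncomputable def Dx (hBd : (Bd S).Nonempty) (x : ZMod n) : ℕ :=
  Nat.find (exists_bd hBd x)

noncomputable def fB (hBd : (Bd S).Nonempty) (x : ZMod n) : ZMod n :=
  x + ((Dx hBd x + 1 : ℕ) : ZMod n)

lemma fB_mem (hBd : (Bd S).Nonempty) (x : ZMod n) : fB hBd x ∈ Bd S := by
  classical
  exact Nat.find_spec (exists_bd hBd x)

lemma fB_min (hBd : (Bd S).Nonempty) (x : ZMod n) {j : ℕ} (hj : j < Dx hBd x) :
    x + ((j + 1 : ℕ) : ZMod n) ∉ Bd S := by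
  classical
  exact Nat.find_min (exists_bd hBd x) hj

lemma Dx_shift (hBd : (Bd S).Nonempty) {x : ZMod n} (hx1 : x + 1 ∉ Bd S) :
    Dx hBd x = Dx hBd (x + 1) + 1 := by
  classical
  set d := Dx hBd (x + 1) with hd
  have hspec : (x + 1) + ((d + 1 : ℕ) : ZMod n) ∈ Bd S := fB_mem hBd (x + 1)
  have hle : Dx hBd x ≤ d + 1 := by
    apply Nat.find_le
    have e : x + ((d + 1 + 1 : ℕ) : ZMod n) = (x + 1) + ((d + 1 : ℕ) : ZMod n) := by
      push_cast; ring
    rw [e]; exact hspec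
  rcases Nat.lt_or_ge (Dx hBd x) (d + 1) with hlt | hge
  · exfalso
    have hspec' : x + ((Dx hBd x + 1 : ℕ) : ZMod n) ∈ Bd S := fB_mem hBd x
    match hDx : Dx hBd x, hspec' with
    | 0, hspec' =>
      apply hx1; simpa using hspec'
    | (j+1), hspec' =>
      have e : x + ((j + 1 + 1 : ℕ) : ZMod n) = (x + 1) + ((j + 1 : ℕ) : ZMod n) := by
        push_cast; ring
      rw [e] at hspec'
      have : d ≤ j := Nat.find_le hspec'
      rw [hDx] at hlt; omega
  · omega

lemma fB_shift (hBd : (Bd S).Nonempty) {x : ZMod n} (hx1 : x + 1 ∉ Bd S) :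
    fB hBd x = fB hBd (x + 1) := by
  unfold fB
  rw [Dx_shift hBd hx1]
  push_cast; ring

lemma not_bd_one {x : ZMod n} (h3 : x + 3 ∉ S) : x + 1 ∉ Bd S := by
  rintro ⟨-, -, ⟨-, h⟩ | ⟨-, -, h⟩⟩ <;>
  · apply h3
    have e : x + 1 + 2 = x + 3 := by ring
    rwa [e] at h

lemma not_bd_two {x : ZMod n} (hx : x ∉ S) (h3 : x + 3 ∉ S) : x + 2 ∉ Bd S := by
  rintro ⟨-, -, ⟨h, -⟩ | ⟨-, h, -⟩⟩
  · apply h3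
    have e : x + 2 + 1 = x + 3 := by ring
    rwa [e] at h
  · apply hx
    have e : x + 2 - 2 = x := by ring
    rwa [e] at h

lemma fB_shift3 (hBd : (Bd S).Nonempty) {x : ZMod n} (hx : x ∉ S) (h3 : x + 3 ∉ S) :
    fB hBd x = fB hBd (x + 3) := by
  have e1 := fB_shift hBd (not_bd_one (S := S) h3)
  have h2 : (x + 1) + 1 ∉ Bd S := by
    have e : x + 1 + 1 = x + 2 := by ring
    rw [e]; exact not_bd_two hx h3
  have e2 := fB_shift hBd h2
  have h3' : (x + 1 + 1) + 1 ∉ Bd S := by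
    have e : x + 1 + 1 + 1 = x + 3 := by ring
    rw [e]; exact fun hb => h3 (Bd_subset S hb)
  have e3 := fB_shift hBd h3'
  rw [e1, e2, e3]
  congr 1; ring

lemma fB_adj (hBd : (Bd S).Nonempty) {x y : ZMod n} (hx : x ∉ S) (hy : y ∉ S)
    (hadj : (circGraph n {1, 3}).Adj x y) : fB hBd x = fB hBd y := by
  have h1 : ∀ a b : ZMod n, a ∉ S → b ∉ S → b - a = 1 → fB hBd a = fB hBd b := by
    intro a b ha hb hab
    have e : b = a + 1 := by linear_combination hab
    subst e
    exact fB_shift hBd (fun h => hb (Bd_subset S h))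
  have h3 : ∀ a b : ZMod n, a ∉ S → b ∉ S → b - a = 3 → fB hBd a = fB hBd b := by
    intro a b ha hb hab
    have e : b = a + 3 := by linear_combination hab
    subst e
    exact fB_shift3 hBd ha hb
  rcases (hadj : x ≠ y ∧ (x - y ∈ ({1, 3} : Set (ZMod n)) ∨ y - x ∈ ({1, 3} : Set (ZMod n)))).2 with h | h <;> rcases h with h | h
  · exact (h1 y x hy hx h).symm
  · exact (h3 y x hy hx h).symm
  · exact h1 x y hx hy h
  · exact h3 x y hx hy h

lemma fB_reach_pred (hn : 7 ≤ n) (hBd : (Bd S).Nonempty) {x : ZMod n} (hx : x ∉ S)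
    (hy : fB hBd x - 1 ∉ S) :
    ((circGraph n {1, 3}).induce Sᶜ).Reachable ⟨x, hx⟩ ⟨fB hBd x - 1, hy⟩ := by
  apply reach hn (Dx hBd x) x (fB hBd x - 1) hx hy
  · unfold fB; push_cast; ring
  · intro j hj1 hj2
    obtain ⟨j', rfl⟩ : ∃ j', j = j' + 1 := ⟨j - 1, by omega⟩
    rcases Nat.lt_or_ge j' (Dx hBd x) with h | h
    · exact fB_min hBd x h
    · omega

section comp
variable (hn : 7 ≤ n) (hBd : (Bd S).Nonempty)
include hBd

lemma fB_walk {v w : ↥Sᶜ} (p : ((circGraph n {1, 3}).induce Sᶜ).Walk v w) :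
    fB hBd v.1 = fB hBd w.1 := by
  induction p with
  | nil => rfl
  | @cons a b c hadj p ih =>
    exact (fB_adj hBd a.2 b.2 hadj).trans ih

noncomputable def FC : ((circGraph n {1, 3}).induce Sᶜ).ConnectedComponent → ZMod n :=
  ConnectedComponent.lift (fun v => fB hBd v.1) (fun _ _ p _ => fB_walk hBd p)

lemma FC_mem (C : ((circGraph n {1, 3}).induce Sᶜ).ConnectedComponent) :
    FC hBd C ∈ Bd S :=
  C.ind (fun v => fB_mem hBd v.1)

include hn in
lemma FC_inj : Function.Injective (FC (S := S) hBd) := by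
  intro C C'
  refine ConnectedComponent.ind₂ (fun v w h => ?_) C C'
  simp only [FC, ConnectedComponent.lift_mk] at h
  have hb1 : fB hBd v.1 ∈ Bd S := fB_mem hBd v.1
  have hb2 : fB hBd w.1 ∈ Bd S := fB_mem hBd w.1
  have hp1 : fB hBd v.1 - 1 ∉ S := hb1.2.1
  have hp2 : fB hBd w.1 - 1 ∉ S := hb2.2.1
  have r1 := fB_reach_pred hn hBd v.2 hp1
  have r2 := fB_reach_pred hn hBd w.2 hp2
  apply ConnectedComponent.sound
  have etarget : (⟨fB hBd v.1 - 1, hp1⟩ : ↥Sᶜ) = ⟨fB hBd w.1 - 1, hp2⟩ :=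
    Subtype.ext (show fB hBd v.1 - 1 = fB hBd w.1 - 1 by rw [h])
  rw [etarget] at r1
  exact r1.trans r2.symm

include hn in
lemma card_comp_le_bd :
    Nat.card ((circGraph n {1, 3}).induce Sᶜ).ConnectedComponent ≤ (Bd S).ncard := by
  have hinj : Function.Injective
      (fun C => (⟨FC hBd C, FC_mem hBd C⟩ : ↥(Bd S))) := by
    intro C C' h
    exact FC_inj hn hBd (congrArg Subtype.val h)
  calc Nat.card ((circGraph n {1, 3}).induce Sᶜ).ConnectedComponent
      ≤ Nat.card ↥(Bd S) := Nat.card_le_card_of_injective _ hinj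
    _ = (Bd S).ncard := Nat.card_coe_set_eq _

omit hBd in
lemma card_comp_le_compl :
    Nat.card ((circGraph n {1, 3}).induce Sᶜ).ConnectedComponent ≤ Sᶜ.ncard := by
  calc Nat.card ((circGraph n {1, 3}).induce Sᶜ).ConnectedComponent
      ≤ Nat.card ↥Sᶜ :=
        Nat.card_le_card_of_surjective (((circGraph n {1, 3}).induce Sᶜ).connectedComponentMk) (fun C => C.exists_rep)
    _ = Sᶜ.ncard := Nat.card_coe_set_eq _

omit hBd in
lemma subsingleton_of_bd_empty (hn : 7 ≤ n) (hBdE : Bd S = ∅) :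
    Subsingleton ((circGraph n {1, 3}).induce Sᶜ).ConnectedComponent := by
  constructor
  refine ConnectedComponent.ind₂ (fun v w => ?_)
  apply ConnectedComponent.sound
  have ev : (⟨v.1, v.2⟩ : ↥Sᶜ) = v := rfl
  have ew : (⟨w.1, w.2⟩ : ↥Sᶜ) = w := rfl
  have := reach (S := S) hn ((w.1 - v.1).val) v.1 w.1 v.2 w.2
    (by rw [ZMod.natCast_zmod_val]; ring) (by intro j _ _; rw [hBdE]; exact id)
  rwa [ev, ew] at this

end comp

section count
variable (hn : 7 ≤ n)

lemma cast_inj_lt {u : ZMod n} (hu : 2 * u = 1) {i j : ℕ} (hi : i < n) (hj : j < n)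
    (h : 2 * (i : ZMod n) = 2 * (j : ZMod n)) : i = j := by
  have : (i : ZMod n) = (j : ZMod n) := by
    calc (i : ZMod n) = u * (2 * (i : ZMod n)) := by rw [← mul_assoc, mul_comm u 2, hu, one_mul]
    _ = u * (2 * (j : ZMod n)) := by rw [h]
    _ = (j : ZMod n) := by rw [← mul_assoc, mul_comm u 2, hu, one_mul]
  have := congrArg ZMod.val this
  rwa [ZMod.val_cast_of_lt hi, ZMod.val_cast_of_lt hj] at this

lemma chain_fwd {e g0 : ZMod n} (he : ∀ g, g ∈ S → g ≠ e → g - 2 ∈ S ∧ g + 2 ∈ S)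
    (hg0 : g0 ∈ S) :
    ∀ j : ℕ, (∀ i : ℕ, i < j → g0 + 2 * (i : ZMod n) ≠ e) → g0 + 2 * (j : ZMod n) ∈ S := by
  intro j
  induction j with
  | zero => intro _; simpa using hg0
  | succ j IH =>
    intro h
    have hprev : g0 + 2 * (j : ZMod n) ∈ S := IH (fun i hi => h i (by omega))
    have hne : g0 + 2 * (j : ZMod n) ≠ e := h j (by omega)
    have := (he _ hprev hne).2
    have e2 : g0 + 2 * ((j + 1 : ℕ) : ZMod n) = g0 + 2 * (j : ZMod n) + 2 := by
      push_cast; ring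
    rwa [e2]

lemma chain_bwd {e g0 : ZMod n} (he : ∀ g, g ∈ S → g ≠ e → g - 2 ∈ S ∧ g + 2 ∈ S)
    (hg0 : g0 ∈ S) :
    ∀ j : ℕ, (∀ i : ℕ, i < j → g0 - 2 * (i : ZMod n) ≠ e) → g0 - 2 * (j : ZMod n) ∈ S := by
  intro j
  induction j with
  | zero => intro _; simpa using hg0
  | succ j IH =>
    intro h
    have hprev : g0 - 2 * (j : ZMod n) ∈ S := IH (fun i hi => h i (by omega))
    have hne : g0 - 2 * (j : ZMod n) ≠ e := h j (by omega)
    have := (he _ hprev hne).1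
    have e2 : g0 - 2 * ((j + 1 : ℕ) : ZMod n) = g0 - 2 * (j : ZMod n) - 2 := by
      push_cast; ring
    rwa [e2]

lemma chain_absorb {u e g0 : ZMod n} (hu : 2 * u = 1)
    (he : ∀ g, g ∈ S → g ≠ e → g - 2 ∈ S ∧ g + 2 ∈ S)
    (hg0 : g0 ∈ S) (hg0e : g0 ≠ e) : ∀ x : ZMod n, x ∈ S := by
  have hn0 : 0 < n := Nat.pos_of_ne_zero (NeZero.ne n)
  have cast2 : ∀ a : ZMod n, 2 * (((u * a).val : ℕ) : ZMod n) = a := by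
    intro a
    rw [ZMod.natCast_zmod_val, ← mul_assoc, mul_comm 2 u]
    rw [mul_comm u 2, hu, one_mul]
  set j0 : ℕ := (u * (e - g0)).val with hj0def
  have hj0lt : j0 < n := ZMod.val_lt _
  have hj0cast : g0 + 2 * ((j0 : ℕ) : ZMod n) = e := by
    rw [hj0def, cast2]; ring
  have hj0pos : j0 ≠ 0 := by
    intro h0
    apply hg0e
    rw [h0] at hj0cast
    simpa using hj0cast
  have hfwd : ∀ j : ℕ, j ≤ j0 → g0 + 2 * (j : ZMod n) ∈ S := by
    intro j hj
    apply chain_fwd he hg0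
    intro i hi hie
    have : 2 * (i : ZMod n) = 2 * ((j0 : ℕ) : ZMod n) := by
      have h1 : (2 : ZMod n) * (i : ZMod n) = e - g0 := by linear_combination hie
      rw [h1]
      have h2 : (2 : ZMod n) * ((j0 : ℕ) : ZMod n) = e - g0 := by linear_combination hj0cast
      rw [h2]
    have := cast_inj_lt hu (by omega) hj0lt this
    omega
  set i0 : ℕ := (u * (g0 - e)).val with hi0def
  have hi0lt : i0 < n := ZMod.val_lt _
  have hi0cast : g0 - 2 * ((i0 : ℕ) : ZMod n) = e := by
    rw [hi0def, cast2]; ring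
  have hi0pos : i0 ≠ 0 := by
    intro h0
    apply hg0e
    rw [h0] at hi0cast
    simpa using hi0cast
  have hbwd : ∀ i : ℕ, i ≤ i0 → g0 - 2 * (i : ZMod n) ∈ S := by
    intro i hi
    apply chain_bwd he hg0
    intro i' hi' hie
    have : 2 * (i' : ZMod n) = 2 * ((i0 : ℕ) : ZMod n) := by
      have h1 : (2 : ZMod n) * (i' : ZMod n) = g0 - e := by linear_combination -hie
      have h2 : (2 : ZMod n) * ((i0 : ℕ) : ZMod n) = g0 - e := by linear_combination -hi0cast
      rw [h1, h2]
    have := cast_inj_lt hu (by omega) hi0lt this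
    omega
  have hsum : i0 + j0 = n := by
    have hcast : ((i0 + j0 : ℕ) : ZMod n) = 0 := by
      have h2 : 2 * ((i0 + j0 : ℕ) : ZMod n) = 0 := by
        push_cast
        have h1 : (2 : ZMod n) * (j0 : ZMod n) = e - g0 := by
          have := hj0cast; linear_combination this
        have h2' : (2 : ZMod n) * (i0 : ZMod n) = g0 - e := by
          have := hi0cast; linear_combination -this
        linear_combination h1 + h2'
      calc ((i0 + j0 : ℕ) : ZMod n) = u * (2 * ((i0 + j0 : ℕ) : ZMod n)) := by
            rw [← mul_assoc, mul_comm u 2, hu, one_mul]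
      _ = 0 := by rw [h2, mul_zero]
    rw [ZMod.natCast_eq_zero_iff] at hcast
    obtain ⟨c, hc⟩ := hcast
    rcases c with _ | _ | c
    · omega
    · omega
    · have hexp : n * (c + 1 + 1) = n * c + 2 * n := by ring
      omega
  intro x
  set j : ℕ := (u * (x - g0)).val with hjdef
  have hjlt : j < n := ZMod.val_lt _
  have hjcast : g0 + 2 * ((j : ℕ) : ZMod n) = x := by
    rw [hjdef, cast2]; ring
  rcases le_or_gt j j0 with hle | hgt
  · rw [← hjcast]; exact hfwd j hle
  · have hile : n - j ≤ i0 := by omega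
    have hkey : g0 - 2 * (((n - j : ℕ) : ℕ) : ZMod n) = x := by
      have hcn : ((n : ℕ) : ZMod n) = 0 := ZMod.natCast_self n
      have h4 : (((n - j : ℕ) : ℕ) : ZMod n) = -(j : ZMod n) := by
        rw [Nat.cast_sub (by omega), hcn]; ring
      rw [h4, ← hjcast]; ring
    rw [← hkey]; exact hbwd _ hile

include hn in
lemma bd_small_contra {u t0 g0 : ZMod n} (hu : 2 * u = 1) (ht0 : t0 ∉ S)
    (hg0 : g0 ∈ Bd S) (hsmall : (S \ Bd S).ncard ≤ 1) : False := by
  have pair_le : ∀ a b : ZMod n, a ∈ S \ Bd S → b ∈ S \ Bd S → a ≠ b → False := by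
    intro a b ha hb hab
    have hsub : ({a, b} : Set (ZMod n)) ⊆ S \ Bd S := by
      intro x hx; rcases hx with rfl | rfl
      · exact ha
      · exact hb
    have h2 : ({a, b} : Set (ZMod n)).ncard = 2 := Set.ncard_pair hab
    have := Set.ncard_le_ncard hsub (Set.toFinite _)
    omega
  by_cases hA : ∃ x, x ∈ S ∧ x + 1 ∈ S
  · obtain ⟨x, hx, hx1⟩ := hA
    by_cases h2 : x + 2 ∈ S
    · apply pair_le (x + 1) (x + 2)
      · exact ⟨hx1, fun hb => hb.2.1 (by
          have e : x + 1 - 1 = x := by ring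
          rwa [e])⟩
      · exact ⟨h2, fun hb => hb.2.1 (by
          have e : x + 2 - 1 = x + 1 := by ring
          rwa [e])⟩
      · intro h
        exact one_ne_zero' hn (by linear_combination -h)
    · apply pair_le x (x + 1)
      · refine ⟨hx, fun hb => ?_⟩
        rcases hb.2.2 with ⟨-, hc⟩ | ⟨hc, -⟩
        · exact h2 hc
        · exact hc hx1
      · exact ⟨hx1, fun hb => hb.2.1 (by
          have e : x + 1 - 1 = x := by ring
          rwa [e])⟩
      · intro h
        exact one_ne_zero' hn (by linear_combination -h)
  · push_neg at hA
    have hBd2 : ∀ g, g ∈ Bd S → g - 2 ∈ S ∧ g + 2 ∈ S := by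
      intro g hg
      rcases hg.2.2 with ⟨hc, -⟩ | ⟨-, hc, hc'⟩
      · exact absurd hc (hA g hg.1)
      · exact ⟨hc, hc'⟩
    have main : ∀ e : ZMod n, e ∉ Bd S →
        (∀ g, g ∈ S → g ≠ e → g ∈ Bd S) → False := by
      intro e heBd hee
      have he : ∀ g, g ∈ S → g ≠ e → g - 2 ∈ S ∧ g + 2 ∈ S :=
        fun g hg hge => hBd2 g (hee g hg hge)
      have hg0e : g0 ≠ e := fun h => heBd (h ▸ hg0)
      have := chain_absorb hu he hg0.1 hg0e
      exact ht0 (this t0)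
    by_cases hne : (S \ Bd S).Nonempty
    · obtain ⟨e, he⟩ := hne
      apply main e he.2
      intro g hg hge
      by_contra hng
      exact pair_le g e ⟨hg, hng⟩ he hge
    · rw [Set.not_nonempty_iff_eq_empty, Set.diff_eq_empty] at hne
      apply main t0 (fun hb => ht0 (Bd_subset S hb))
      intro g hg _
      exact hne hg

include hn in
lemma bd_add_two_le {u t0 : ZMod n} (hu : 2 * u = 1) (ht0 : t0 ∉ S)
    (hBd : (Bd S).Nonempty) : (Bd S).ncard + 2 ≤ S.ncard := by
  obtain ⟨g0, hg0⟩ := hBd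
  have hsplit : (S \ Bd S).ncard + (Bd S).ncard = S.ncard :=
    Set.ncard_diff_add_ncard_of_subset (Bd_subset S) (Set.toFinite _)
  by_contra h
  exact bd_small_contra hn hu ht0 hg0 (by omega)

end count
end S
end Stmt2Aux

theorem stmt2 (k : ℕ) (hk : 3 ≤ k) (S : Set (ZMod (2*k+1)))
    (hS : IsVertexCut (circGraph (2*k+1) {1, 3}) S) :
    ((k : ℝ) + 1) / ((k : ℝ) - 1) ≤
      (S.ncard : ℝ) / (numComp (circGraph (2*k+1) {1, 3}) S : ℝ) := by
  haveI : NeZero (2*k+1) := ⟨by omega⟩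
  have hn : 7 ≤ 2*k+1 := by omega
  have hc : 1 < Nat.card (((circGraph (2*k+1) {1, 3}).induce Sᶜ).ConnectedComponent) := hS
  have hT : ∃ t0 : ZMod (2*k+1), t0 ∉ S := by
    by_contra h
    push_neg at h
    have hE : IsEmpty ↥Sᶜ := by
      constructor
      rintro ⟨x, hx⟩
      exact hx (h x)
    haveI := hE
    rw [Nat.card_of_isEmpty] at hc
    omega
  obtain ⟨t0, ht0⟩ := hT
  have hBd : (Stmt2Aux.Bd S).Nonempty := by
    rw [Set.nonempty_iff_ne_empty]
    intro hE
    haveI := Stmt2Aux.subsingleton_of_bd_empty (S := S) hn hE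
    rcases isEmpty_or_nonempty (((circGraph (2*k+1) {1, 3}).induce Sᶜ).ConnectedComponent)
      with hE' | hN'
    · haveI := hE'
      rw [Nat.card_of_isEmpty] at hc
      omega
    · haveI := hN'
      rw [Nat.card_unique] at hc
      omega
  have hu : (2 : ZMod (2*k+1)) * ((k : ZMod (2*k+1)) + 1) = 1 := by
    have h1 : ((2*k+1 : ℕ) : ZMod (2*k+1)) = 0 := ZMod.natCast_self _
    push_cast at h1
    linear_combination h1
  have hcq := Stmt2Aux.card_comp_le_bd (S := S) hn hBd
  have hct := Stmt2Aux.card_comp_le_compl (S := S)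
  have hs := Stmt2Aux.bd_add_two_le (S := S) hn hu ht0 hBd
  have hst : S.ncard + Sᶜ.ncard = 2*k+1 := by
    rw [Set.ncard_add_ncard_compl]
    rw [Nat.card_eq_fintype_card, ZMod.card]
  have hck : Nat.card (((circGraph (2*k+1) {1, 3}).induce Sᶜ).ConnectedComponent) + 1 ≤ k := by
    omega
  have hcs : Nat.card (((circGraph (2*k+1) {1, 3}).induce Sᶜ).ConnectedComponent) + 2
      ≤ S.ncard := by omega
  have hnc : numComp (circGraph (2*k+1) {1, 3}) S
      = Nat.card (((circGraph (2*k+1) {1, 3}).induce Sᶜ).ConnectedComponent) := rfl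
  rw [hnc]
  set c := Nat.card (((circGraph (2*k+1) {1, 3}).induce Sᶜ).ConnectedComponent) with hcdef
  have hkR : (3 : ℝ) ≤ (k : ℝ) := by exact_mod_cast hk
  have hcR : (2 : ℝ) ≤ (c : ℝ) := by exact_mod_cast hc
  have hckR : (c : ℝ) + 1 ≤ (k : ℝ) := by exact_mod_cast hck
  have hcsR : (c : ℝ) + 2 ≤ (S.ncard : ℝ) := by exact_mod_cast hcs
  rw [div_le_div_iff₀ (by linarith) (by linarith)]
  have h1 : (0:ℝ) ≤ ((k:ℝ) - 1) * ((S.ncard : ℝ) - (c:ℝ) - 2) :=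
    mul_nonneg (by linarith) (by linarith)
  nlinarith [h1]
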